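/- Let K be an algebraically closed field, let V be a nonzero finite-dimensional K-vector space of dimension n, and let A, B : V → V be invertible linear maps such that the rank of ABA⁻¹B⁻¹ − id_V is at most 1. Then A and B are simultaneously upper triangularizable: there exists a complete flag 0 = V₀ ⊂ V₁ ⊂ ⋯ ⊂ Vₙ = V of subspaces with dim Vᵢ = i such that every Vᵢ is invariant under both A and B. -/

import Mathlib

open Module LinearMap

section Aux

universe u v

variable {K : Type u} [Field K]

/-- Composing on the left with an injective linear map preserves rank. -/
lemma rank_comp_injective_aux {V W X : Type v} [AddCommGroup V] [Module K V]
    [AddCommGroup W] [Module K W] [AddCommGroup X] [Module K X]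
    (f : V →ₗ[K] W) (g : W →ₗ[K] X) (hg : Function.Injective g) :
    LinearMap.rank (g ∘ₗ f) = LinearMap.rank f := by
  rw [LinearMap.rank, LinearMap.rank, LinearMap.range_comp]
  exact ((Submodule.equivMapOfInjective g hg (LinearMap.range f)).symm).rank_eq

/-- A rank-at-most-one map whose value at `v₀` is nonzero has all values in the span
of that value. -/
lemma mem_span_of_rank_le_one {V W : Type v} [AddCommGroup V] [Module K V]
    [AddCommGroup W] [Module K W] (C : V →ₗ[K] W) (hC : LinearMap.rank C ≤ 1)
    {v₀ : V} (hv₀ : C v₀ ≠ 0) (y : V) : C y ∈ Submodule.span K {C v₀} := by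
  obtain ⟨w₀, hw₀⟩ := rank_le_one_iff.mp hC
  obtain ⟨r₀, hr₀⟩ := hw₀ ⟨C v₀, LinearMap.mem_range_self C v₀⟩
  have hr₀' : r₀ • (w₀ : W) = C v₀ := congrArg Subtype.val hr₀
  have hr₀0 : r₀ ≠ 0 := by
    rintro rfl
    rw [zero_smul] at hr₀'
    exact hv₀ hr₀'.symm
  obtain ⟨r, hr⟩ := hw₀ ⟨C y, LinearMap.mem_range_self C y⟩
  have hr' : r • (w₀ : W) = C y := congrArg Subtype.val hr
  have : C y = (r * r₀⁻¹) • C v₀ := by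
    rw [← hr₀', ← hr', smul_smul, mul_assoc, inv_mul_cancel₀ hr₀0, mul_one]
  rw [this]
  exact Submodule.smul_mem _ _ (Submodule.mem_span_singleton_self _)

/-- Key lemma: two endomorphisms with commutator of rank at most one have a common
eigenvector (over an algebraically closed field, in positive finite dimension). -/
lemma exists_common_eigenvector_aux [IsAlgClosed K] (m : ℕ) :
    ∀ (V : Type v) [AddCommGroup V] [Module K V] [FiniteDimensional K V],
      finrank K V = m → 0 < m → ∀ f g : Module.End K V,
      LinearMap.rank (f * g - g * f) ≤ 1 →
      ∃ v : V, v ≠ 0 ∧ (∃ μ : K, f v = μ • v) ∧ (∃ ν : K, g v = ν • v) := by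
  induction m using Nat.strong_induction_on with
  | _ m ih =>
  intro V _ _ _ hm hpos f g hrank
  have : Nontrivial V := Module.nontrivial_of_finrank_pos (hm ▸ hpos)
  set C : Module.End K V := f * g - g * f with hC
  have hCapp : ∀ x : V, C x = f (g x) - g (f x) := fun x => by
    simp [hC, Module.End.mul_apply]
  obtain ⟨μ, hμ⟩ := Module.End.exists_eigenvalue f
  set E := f.eigenspace μ with hEdef
  by_cases hE : E ≤ LinearMap.ker C
  · -- E is g-invariant; take an eigenvector of g restricted to E
    have hgE : ∀ x ∈ E, g x ∈ E := by
      intro x hx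
      have hfx : f x = μ • x := Module.End.mem_eigenspace_iff.mp hx
      have hCx : C x = 0 := hE hx
      have h0 : f (g x) - g (f x) = 0 := by rw [← hCapp, hCx]
      have : f (g x) = g (f x) := sub_eq_zero.mp h0
      rw [Module.End.mem_eigenspace_iff]
      rw [this, hfx, map_smul]
    set g' : Module.End K E := g.restrict hgE with hg'
    have hEnt : Nontrivial E :=
      Submodule.nontrivial_iff_ne_bot.mpr hμ
    obtain ⟨ν, hν⟩ := Module.End.exists_eigenvalue g'
    obtain ⟨w, hw⟩ := hν.exists_hasEigenvector
    refine ⟨(w : V), ?_, ⟨μ, ?_⟩, ⟨ν, ?_⟩⟩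
    · exact fun h => hw.2 (Subtype.ext h)
    · exact Module.End.mem_eigenspace_iff.mp w.2
    · have := Module.End.mem_eigenspace_iff.mp hw.1
      have h2 : ((g' w : E) : V) = g (w : V) := LinearMap.restrict_coe_apply _ _ _
      calc g (w : V) = ((g' w : E) : V) := h2.symm
        _ = ((ν • w : E) : V) := by rw [this]
        _ = ν • (w : V) := rfl
  · -- E is not contained in ker C; use the range of f - μ•1
    obtain ⟨v₀, hv₀E, hv₀C⟩ := SetLike.not_le_iff_exists.mp hE
    have hfv₀ : f v₀ = μ • v₀ := Module.End.mem_eigenspace_iff.mp hv₀E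
    have hCv₀ : C v₀ ≠ 0 := fun h => hv₀C (LinearMap.mem_ker.mpr h)
    have hv₀0 : v₀ ≠ 0 := by
      rintro rfl
      exact hCv₀ (map_zero C)
    set h : Module.End K V := f - μ • (1 : Module.End K V) with hh
    have happ : ∀ x : V, h x = f x - μ • x := fun x => by
      simp [hh]
    set R := LinearMap.range h with hR
    have hCv₀R : C v₀ ∈ R := by
      have : C v₀ = h (g v₀) := by
        rw [hCapp, happ, hfv₀, map_smul]
      rw [this]
      exact LinearMap.mem_range_self _ _
    have hCR : ∀ y : V, C y ∈ R := by
      intro y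
      have := mem_span_of_rank_le_one C hrank hCv₀ y
      exact (Submodule.span_singleton_le_iff_mem _ _).mpr hCv₀R this
    have hfR : ∀ x ∈ R, f x ∈ R := by
      rintro x ⟨y, rfl⟩
      have : f (h y) = h (f y) := by
        rw [happ, happ, map_sub, map_smul]
      rw [this]
      exact LinearMap.mem_range_self _ _
    have hgR : ∀ x ∈ R, g x ∈ R := by
      rintro x ⟨y, rfl⟩
      have : g (h y) = h (g y) - C y := by
        rw [happ, happ, hCapp, map_sub, map_smul]
        abel
      rw [this]
      exact Submodule.sub_mem _ (LinearMap.mem_range_self _ _) (hCR y)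
    have hR0 : R ≠ ⊥ := by
      intro hbot
      have hzero : h = 0 := LinearMap.range_eq_bot.mp hbot
      have : ∀ x : V, f x = μ • x := by
        intro x
        have := happ x
        rw [hzero] at this
        simpa [sub_eq_zero] using this.symm
      apply hCv₀
      rw [hCapp, this (g v₀), this v₀, map_smul, sub_self]
    have hkerpos : 0 < finrank K (LinearMap.ker h) := by
      have hv₀ker : v₀ ∈ LinearMap.ker h := by
        rw [LinearMap.mem_ker, happ, hfv₀, sub_self]
      have : Nontrivial (LinearMap.ker h) :=
        Submodule.nontrivial_iff_ne_bot.mpr (fun hb => hv₀0 (by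
          rw [hb] at hv₀ker; simpa using hv₀ker))
      exact finrank_pos
    have hRlt : finrank K R < m := by
      have h1 := LinearMap.finrank_range_add_finrank_ker h
      rw [hm] at h1
      rw [hR]
      omega
    have hRpos : 0 < finrank K R := by
      have : Nontrivial R := Submodule.nontrivial_iff_ne_bot.mpr hR0
      exact finrank_pos
    set f' : Module.End K R := f.restrict hfR with hf'
    set g' : Module.End K R := g.restrict hgR with hg''
    have hcomm : R.subtype ∘ₗ (f' * g' - g' * f') = C ∘ₗ R.subtype := by
      ext x
      rw [hf', hg'']
      simp only [LinearMap.comp_apply, LinearMap.sub_apply, Module.End.mul_apply,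
        Submodule.coe_subtype, AddSubgroupClass.coe_sub, LinearMap.restrict_coe_apply,
        hCapp]
    have hr' : LinearMap.rank (f' * g' - g' * f') ≤ 1 := by
      have h1 : LinearMap.rank (R.subtype ∘ₗ (f' * g' - g' * f'))
          = LinearMap.rank (f' * g' - g' * f') :=
        rank_comp_injective_aux _ _ (Submodule.injective_subtype R)
      rw [← h1, hcomm]
      exact le_trans (LinearMap.rank_comp_le_left _ _) hrank
    obtain ⟨w, hw0, ⟨μ', hμ'⟩, ⟨ν', hν'⟩⟩ :=
      ih (finrank K R) hRlt R rfl hRpos f' g' hr'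
    refine ⟨(w : V), fun hc => hw0 (Subtype.ext hc), ⟨μ', ?_⟩, ⟨ν', ?_⟩⟩
    · calc f (w : V) = ((f' w : R) : V) := (LinearMap.restrict_coe_apply _ _ _).symm
        _ = ((μ' • w : R) : V) := by rw [hμ']
        _ = μ' • (w : V) := rfl
    · calc g (w : V) = ((g' w : R) : V) := (LinearMap.restrict_coe_apply _ _ _).symm
        _ = ((ν' • w : R) : V) := by rw [hν']
        _ = ν' • (w : V) := rfl

/-- Dimension counting for preimages under the quotient map. -/
lemma finrank_comap_mkQ_aux {V : Type v} [AddCommGroup V] [Module K V]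
    [FiniteDimensional K V] (L : Submodule K V) (W : Submodule K (V ⧸ L)) :
    finrank K (W.comap L.mkQ) = finrank K W + finrank K L := by
  set P := W.comap L.mkQ with hP
  have hLP : L ≤ P := by
    intro x hx
    rw [hP, Submodule.mem_comap]
    have : L.mkQ x = 0 := by
      rwa [← LinearMap.mem_ker, Submodule.ker_mkQ]
    rw [this]
    exact W.zero_mem
  set φ := L.mkQ.domRestrict P with hφ
  have hrange : LinearMap.range φ = W := by
    rw [hφ, LinearMap.range_domRestrict, hP]
    exact Submodule.map_comap_eq_of_surjective (Submodule.mkQ_surjective L) W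
  have hker : LinearMap.ker φ = L.comap P.subtype := by
    ext x
    simp only [LinearMap.mem_ker, hφ, LinearMap.domRestrict_apply, Submodule.mem_comap,
      Submodule.coe_subtype, Submodule.mkQ_apply, Submodule.Quotient.mk_eq_zero]
  have h1 : finrank K (LinearMap.range φ) + finrank K (LinearMap.ker φ) = finrank K P :=
    LinearMap.finrank_range_add_finrank_ker φ
  rw [hrange, hker] at h1
  rw [← h1, (Submodule.comapSubtypeEquivOfLe hLP).finrank_eq]

/-- Simultaneous triangularization for endomorphisms with commutator of rank at
most one, stated as existence of a common invariant complete flag. -/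
lemma flag_of_comm_rank_le_one_aux [IsAlgClosed K] (n : ℕ) :
    ∀ (V : Type v) [AddCommGroup V] [Module K V] [FiniteDimensional K V],
      finrank K V = n → ∀ f g : Module.End K V,
      LinearMap.rank (f * g - g * f) ≤ 1 →
      ∃ W : Fin (n + 1) → Submodule K V,
        Monotone W ∧ W 0 = ⊥ ∧ W (Fin.last n) = ⊤ ∧
        (∀ i : Fin (n + 1), finrank K (W i) = (i : ℕ)) ∧
        (∀ i : Fin (n + 1), ∀ x ∈ W i, f x ∈ W i ∧ g x ∈ W i) := by
  induction n with
  | zero =>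
    intro V _ _ _ hn f g _
    have hsub : Subsingleton V := (finrank_zero_iff (R := K)).mp hn
    refine ⟨fun _ => ⊥, monotone_const, rfl, ?_, ?_, ?_⟩
    · ext x
      have : x = 0 := Subsingleton.elim x 0
      simp [this]
    · intro i
      fin_cases i
      simp
    · intro i x hx
      simp only [Submodule.mem_bot] at hx
      subst hx
      simp
  | succ m ih =>
    intro V _ _ _ hn f g hrank
    have hnt : Nontrivial V := Module.nontrivial_of_finrank_pos
      (by rw [hn]; exact m.succ_pos)
    obtain ⟨v, hv0, ⟨μ, hfv⟩, ⟨ν, hgv⟩⟩ :=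
      exists_common_eigenvector_aux (finrank K V) V rfl
        (by rw [hn]; exact m.succ_pos) f g hrank
    set L : Submodule K V := Submodule.span K {v} with hL
    have hLdim : finrank K L = 1 := finrank_span_singleton hv0
    have hfL : L ≤ L.comap f := by
      rw [hL, Submodule.span_singleton_le_iff_mem, Submodule.mem_comap, hfv]
      exact Submodule.smul_mem _ _ (Submodule.mem_span_singleton_self v)
    have hgL : L ≤ L.comap g := by
      rw [hL, Submodule.span_singleton_le_iff_mem, Submodule.mem_comap, hgv]
      exact Submodule.smul_mem _ _ (Submodule.mem_span_singleton_self v)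
    have hQdim : finrank K (V ⧸ L) = m := by
      have := Submodule.finrank_quotient_add_finrank L
      rw [hn, hLdim] at this
      omega
    set fQ : Module.End K (V ⧸ L) := Submodule.mapQ L L f hfL with hfQ
    set gQ : Module.End K (V ⧸ L) := Submodule.mapQ L L g hgL with hgQ
    have hfQmk : ∀ x : V, fQ (L.mkQ x) = L.mkQ (f x) := fun x => by
      simp [hfQ, Submodule.mapQ_apply, Submodule.mkQ_apply]
    have hgQmk : ∀ x : V, gQ (L.mkQ x) = L.mkQ (g x) := fun x => by
      simp [hgQ, Submodule.mapQ_apply, Submodule.mkQ_apply]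
    have hcomm : (fQ * gQ - gQ * fQ) ∘ₗ L.mkQ = L.mkQ ∘ₗ (f * g - g * f) := by
      ext x
      simp only [LinearMap.comp_apply, LinearMap.sub_apply, Module.End.mul_apply,
        hfQmk, hgQmk, map_sub]
    have hrankQ : LinearMap.rank (fQ * gQ - gQ * fQ) ≤ 1 := by
      have h1 : LinearMap.range ((fQ * gQ - gQ * fQ) ∘ₗ L.mkQ)
          = LinearMap.range (fQ * gQ - gQ * fQ) :=
        LinearMap.range_comp_of_range_eq_top _ (Submodule.range_mkQ L)
      have h2 : LinearMap.rank ((fQ * gQ - gQ * fQ) ∘ₗ L.mkQ)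
          ≤ LinearMap.rank (f * g - g * f) := by
        rw [hcomm]
        exact LinearMap.rank_comp_le_right _ _
      calc LinearMap.rank (fQ * gQ - gQ * fQ)
          = Module.rank K (LinearMap.range ((fQ * gQ - gQ * fQ) ∘ₗ L.mkQ)) := by rw [h1]
        _ ≤ 1 := le_trans h2 hrank
    obtain ⟨W', hmono', h0', hlast', hdim', hinv'⟩ := ih (V ⧸ L) hQdim fQ gQ hrankQ
    set W : Fin (m + 2) → Submodule K V :=
      Fin.cons ⊥ (fun j : Fin (m + 1) => (W' j).comap L.mkQ) with hW
    have hWsucc : ∀ j : Fin (m + 1), W j.succ = (W' j).comap L.mkQ := fun j => by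
      simp [hW]
    have hW0 : W 0 = ⊥ := by simp [hW]
    refine ⟨W, ?_, hW0, ?_, ?_, ?_⟩
    · rw [Fin.monotone_iff_le_succ]
      intro i
      induction i using Fin.cases with
      | zero =>
        have : (0 : Fin (m + 1)).castSucc = 0 := rfl
        rw [this, hW0]
        exact bot_le
      | succ j =>
        rw [← Fin.succ_castSucc, hWsucc, hWsucc]
        exact Submodule.comap_mono (hmono' (Fin.castSucc_le_succ j))
    · have : Fin.last (m + 1) = (Fin.last m).succ := (Fin.succ_last m).symm
      rw [this, hWsucc, hlast', Submodule.comap_top]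
    · intro i
      induction i using Fin.cases with
      | zero => simp [hW0]
      | succ j =>
        rw [hWsucc, finrank_comap_mkQ_aux L (W' j), hdim' j, hLdim, Fin.val_succ]
    · intro i
      induction i using Fin.cases with
      | zero =>
        intro x hx
        rw [hW0] at hx ⊢
        simp only [Submodule.mem_bot] at hx
        subst hx
        simp
      | succ j =>
        intro x hx
        rw [hWsucc] at hx ⊢
        rw [Submodule.mem_comap] at hx
        obtain ⟨h1, h2⟩ := hinv' j (L.mkQ x) hx
        constructor
        · rw [Submodule.mem_comap, ← hfQmk]
          exact h1
        · rw [Submodule.mem_comap, ← hgQmk]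
          exact h2

end Aux

/-- Two invertible endomorphisms `A`, `B` of a nonzero finite-dimensional vector
space over an algebraically closed field such that `ABA⁻¹B⁻¹ − 1` has rank at most 1
are simultaneously upper triangularizable: there is a complete flag invariant under
both of them. -/
theorem simultaneously_triangularizable_of_multiplicative_commutator_rank_le_one
    (K : Type*) [Field K] [IsAlgClosed K]
    (V : Type*) [AddCommGroup V] [Module K V] [FiniteDimensional K V]
    (n : ℕ) (hn : Module.finrank K V = n) (hn0 : n ≠ 0)
    (A B : V ≃ₗ[K] V)
    (hrank : LinearMap.rank
      ((A.toLinearMap ∘ₗ B.toLinearMap ∘ₗ A.symm.toLinearMap ∘ₗ B.symm.toLinearMap)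
        - LinearMap.id) ≤ 1) :
    ∃ W : Fin (n + 1) → Submodule K V,
      Monotone W ∧ W 0 = ⊥ ∧ W (Fin.last n) = ⊤ ∧
      (∀ i : Fin (n + 1), Module.finrank K (W i) = (i : ℕ)) ∧
      (∀ i : Fin (n + 1), ∀ x ∈ W i, A x ∈ W i ∧ B x ∈ W i) := by
  set f : Module.End K V := A.toLinearMap with hf
  set g : Module.End K V := B.toLinearMap with hg
  set D := (A.toLinearMap ∘ₗ B.toLinearMap ∘ₗ A.symm.toLinearMap ∘ₗ B.symm.toLinearMap)
        - LinearMap.id with hD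
  have hkey : f * g - g * f = D ∘ₗ (g ∘ₗ f) := by
    ext x
    simp [hf, hg, hD, Module.End.mul_apply, LinearMap.sub_apply, LinearMap.comp_apply]
  have hrank' : LinearMap.rank (f * g - g * f) ≤ 1 := by
    rw [hkey]
    exact le_trans (LinearMap.rank_comp_le_left _ _) hrank
  obtain ⟨W, h1, h2, h3, h4, h5⟩ := flag_of_comm_rank_le_one_aux n V hn f g hrank'
  exact ⟨W, h1, h2, h3, h4, fun i x hx => h5 i x hx⟩
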